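/- For every natural number n, parameters u_ℓ = (θ_ℓ, φ_ℓ, λ_ℓ) ∈ ℝ³ for ℓ = 0,…,n−1, and all n-bit strings J' and J, the coin-marginal transition probability of one walk evolution equals the quantum kernel: ∑_{k ∈ ZMod 2} ‖U_{(k,J'),(0,J)}‖² = f_q(J' ⊕ J), where f_q(I) = ∏_{ℓ=0}^{n−1} c_ℓ with c_ℓ = cos²(θ_ℓ/2) if I_ℓ ⊕ I_{ℓ−1} = 0 and c_ℓ = sin²(θ_ℓ/2) if I_ℓ ⊕ I_{ℓ−1} = 1 (convention I_{−1} = 0). In particular this probability does not depend on the phases φ_ℓ and λ_ℓ. -/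

import Mathlib

/-- The single-qubit rotation gate `U3(θ,φ,λ)`, indexed by `ZMod 2`. -/
noncomputable def U3 (θ φ lam : ℝ) : Matrix (ZMod 2) (ZMod 2) ℂ :=
  Matrix.of fun μ ν =>
    if μ = 0 then
      (if ν = 0 then (Real.cos (θ / 2) : ℂ)
       else -Complex.exp (Complex.I * lam) * (Real.sin (θ / 2) : ℂ))
    else
      (if ν = 0 then Complex.exp (Complex.I * φ) * (Real.sin (θ / 2) : ℂ)
       else Complex.exp (Complex.I * (lam + φ)) * (Real.cos (θ / 2) : ℂ))

/-- Coin rotation: `U3` acting on the coin qubit, identity on the graph qubits. -/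
noncomputable def coinR (n : ℕ) (u : ℝ × ℝ × ℝ) :
    Matrix (ZMod 2 × (Fin n → ZMod 2)) (ZMod 2 × (Fin n → ZMod 2)) ℂ :=
  Matrix.of fun p q => if p.2 = q.2 then U3 u.1 u.2.1 u.2.2 p.1 q.1 else 0

/-- Controlled flip of the `k`-th graph qubit, controlled by the coin qubit. -/
def flipC (n : ℕ) (k : Fin n) :
    Matrix (ZMod 2 × (Fin n → ZMod 2)) (ZMod 2 × (Fin n → ZMod 2)) ℂ :=
  Matrix.of fun p q =>
    if p.1 = q.1 ∧ p.2 = q.2 + q.1 • (Pi.single k 1 : Fin n → ZMod 2) then 1 else 0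

/-- One quantum-walk evolution `U = W_{n-1} ⋯ W_1 W_0`, where `W_k = C_k · R_k`. -/
noncomputable def walkU (n : ℕ) (u : Fin n → ℝ × ℝ × ℝ) :
    Matrix (ZMod 2 × (Fin n → ZMod 2)) (ZMod 2 × (Fin n → ZMod 2)) ℂ :=
  ((List.finRange n).reverse.map (fun k => flipC n k * coinR n (u k))).prod

/-- The bit `I_{ℓ-1}` of an `n`-bit string, with the convention `I_{-1} = 0`. -/
def prevBit (n : ℕ) (I : Fin n → ZMod 2) (ℓ : Fin n) : ZMod 2 :=
  if 0 < (ℓ : ℕ) then I ⟨(ℓ : ℕ) - 1, lt_of_le_of_lt (Nat.sub_le _ _) ℓ.isLt⟩ else 0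

/-- Quantum random-walk kernel, with the convention `I_{-1} = 0`. -/
noncomputable def fq (n : ℕ) (θ : Fin n → ℝ) (I : Fin n → ZMod 2) : ℝ :=
  ∏ ℓ : Fin n,
    if I ℓ + prevBit n I ℓ = 0 then Real.cos (θ ℓ / 2) ^ 2 else Real.sin (θ ℓ / 2) ^ 2

-- auxiliary
def pb (n : ℕ) (I : Fin n → ZMod 2) (m : ℕ) : ZMod 2 :=
  if h : 0 < m ∧ m ≤ n then I ⟨m - 1, by omega⟩ else 0

lemma prevBit_eq_pb {n : ℕ} (I : Fin n → ZMod 2) (ℓ : Fin n) :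
    prevBit n I ℓ = pb n I ℓ := by
  unfold prevBit pb
  rcases Nat.eq_zero_or_pos (ℓ : ℕ) with h | h
  · simp [h]
  · rw [if_pos h, dif_pos ⟨h, Nat.le_of_lt ℓ.isLt⟩]

noncomputable def term {n : ℕ} (u : Fin n → ℝ × ℝ × ℝ) (I : Fin n → ZMod 2) (ℓ : Fin n) : ℂ :=
  U3 (u ℓ).1 (u ℓ).2.1 (u ℓ).2.2 (I ℓ) (prevBit n I ℓ)

noncomputable def Mpart (n : ℕ) (u : Fin n → ℝ × ℝ × ℝ) (m : ℕ) :
    Matrix (ZMod 2 × (Fin n → ZMod 2)) (ZMod 2 × (Fin n → ZMod 2)) ℂ :=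
  (((List.finRange n).take m).reverse.map (fun k => flipC n k * coinR n (u k))).prod

lemma Mpart_succ {n : ℕ} (u : Fin n → ℝ × ℝ × ℝ) (m : ℕ) (hm : m < n) :
    Mpart n u (m + 1) = (flipC n ⟨m, hm⟩ * coinR n (u ⟨m, hm⟩)) * Mpart n u m := by
  unfold Mpart
  rw [List.take_succ]
  have hlen : m < (List.finRange n).length := by simpa using hm
  rw [List.getElem?_eq_getElem hlen]
  simp [List.prod_cons]

lemma flipC_mul {n : ℕ} (k : Fin n) (X : Matrix (ZMod 2 × (Fin n → ZMod 2)) (ZMod 2 × (Fin n → ZMod 2)) ℂ)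
    (c : ZMod 2) (K : Fin n → ZMod 2) (q : ZMod 2 × (Fin n → ZMod 2)) :
    (flipC n k * X) (c, K) q = X (c, K + c • (Pi.single k 1 : Fin n → ZMod 2)) q := by
  rw [Matrix.mul_apply]
  have hself : ∀ (d : ZMod 2) (e : Fin n → ZMod 2), d • e + d • e = 0 := by
    intro d e
    rw [← add_smul]
    have : d + d = 0 := by revert d; decide
    simp [this]
  rw [Finset.sum_eq_single (c, K + c • (Pi.single k 1 : Fin n → ZMod 2))]
  · rw [flipC, Matrix.of_apply, if_pos, one_mul]
    exact ⟨rfl, by simp [add_assoc, hself]⟩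
  · rintro ⟨c', K'⟩ - hb
    rw [flipC, Matrix.of_apply, if_neg, zero_mul]
    rintro ⟨h1, h2⟩
    apply hb
    subst h1
    have : K' = K + c • (Pi.single k 1 : Fin n → ZMod 2) := by
      simp only at h2
      rw [h2, add_assoc, hself, add_zero]
    rw [this]
  · intro h; exact absurd (Finset.mem_univ _) h

lemma coinR_mul {n : ℕ} (v : ℝ × ℝ × ℝ) (X : Matrix (ZMod 2 × (Fin n → ZMod 2)) (ZMod 2 × (Fin n → ZMod 2)) ℂ)
    (c : ZMod 2) (K : Fin n → ZMod 2) (q : ZMod 2 × (Fin n → ZMod 2)) :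
    (coinR n v * X) (c, K) q = ∑ c' : ZMod 2, U3 v.1 v.2.1 v.2.2 c c' * X (c', K) q := by
  rw [Matrix.mul_apply, Fintype.sum_prod_type]
  simp [coinR, Finset.sum_ite_eq, ite_mul]

lemma pb_succ {n : ℕ} (I : Fin n → ZMod 2) (m : ℕ) (hm : m < n) :
    pb n I (m + 1) = I ⟨m, hm⟩ := by
  rw [pb, dif_pos ⟨Nat.succ_pos m, hm⟩]
  exact congrArg I (Fin.ext (Nat.succ_sub_one m))

lemma pb_congr {n : ℕ} (I I' : Fin n → ZMod 2) (m : ℕ)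
    (h : ∀ ℓ : Fin n, (ℓ : ℕ) < m → I ℓ = I' ℓ) :
    pb n I m = pb n I' m := by
  unfold pb
  split_ifs with hh
  · exact h ⟨m - 1, by omega⟩ (show m - 1 < m by omega)
  · rfl

lemma key {n : ℕ} (u : Fin n → ℝ × ℝ × ℝ) (m : ℕ) (hm : m ≤ n)
    (c : ZMod 2) (K J : Fin n → ZMod 2) :
    Mpart n u m (c, K) (0, J) =
      if (∀ ℓ : Fin n, m ≤ (ℓ : ℕ) → K ℓ = J ℓ) ∧ c = pb n (K + J) m then
        ∏ ℓ : Fin n, if (ℓ : ℕ) < m then term u (K + J) ℓ else 1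
      else 0 := by
  induction m generalizing c K with
  | zero =>
    have hprod : (∏ ℓ : Fin n, if (ℓ : ℕ) < 0 then term u (K + J) ℓ else 1) = 1 :=
      Finset.prod_eq_one (by simp)
    rw [hprod]
    simp only [Mpart, List.take_zero, List.reverse_nil, List.map_nil, List.prod_nil,
      Matrix.one_apply]
    by_cases h : (c, K) = ((0 : ZMod 2), J)
    · rw [if_pos h, if_pos]
      rw [Prod.mk.injEq] at h
      obtain ⟨h1, h2⟩ := h
      refine ⟨fun ℓ _ => by rw [h2], by simp [h1, pb]⟩
    · rw [if_neg h, if_neg]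
      rintro ⟨h1, h2⟩
      apply h
      have hKJ : K = J := funext fun ℓ => h1 ℓ (Nat.zero_le _)
      simp only [pb] at h2
      rw [dif_neg (by omega)] at h2
      rw [h2, hKJ]
  | succ m ih =>
    have hmn : m < n := hm
    set km : Fin n := ⟨m, hmn⟩ with hkm
    rw [Mpart_succ u m hmn, Matrix.mul_assoc, flipC_mul, coinR_mul]
    set K₁ := K + c • (Pi.single km 1 : Fin n → ZMod 2) with hK1
    have hsum : ∀ c' : ZMod 2,
        Mpart n u m (c', K₁) (0, J) =
          if (∀ ℓ : Fin n, m ≤ (ℓ : ℕ) → K₁ ℓ = J ℓ) ∧ c' = pb n (K₁ + J) m then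
            ∏ ℓ : Fin n, if (ℓ : ℕ) < m then term u (K₁ + J) ℓ else 1
          else 0 := fun c' => ih (Nat.le_of_lt hmn) c' K₁
    simp only [hsum]
    have hK1m : K₁ km = K km + c := by
      simp [hK1, Pi.single_apply]
    by_cases hP : ∀ ℓ : Fin n, m ≤ (ℓ : ℕ) → K₁ ℓ = J ℓ
    · simp only [eq_true hP, true_and, mul_ite, mul_zero]
      rw [Finset.sum_ite_eq' Finset.univ (pb n (K₁ + J) m)
        (fun c' => U3 (u km).1 (u km).2.1 (u km).2.2 c c' *
          ∏ ℓ : Fin n, if (ℓ : ℕ) < m then term u (K₁ + J) ℓ else 1),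
        if_pos (Finset.mem_univ _)]
      have hc : c = (K + J) km := by
        have h0 := hP km (le_refl m)
        rw [hK1m] at h0
        have : (K + J) km = K km + J km := rfl
        rw [this]
        exact (by decide : ∀ a b c : ZMod 2, a + c = b → c = a + b) _ _ _ h0
      have hK1ne : ∀ ℓ : Fin n, ℓ ≠ km → K₁ ℓ = K ℓ := by
        intro ℓ hne
        simp [hK1, Pi.single_apply, hne]
      have hIne : ∀ ℓ : Fin n, ℓ ≠ km → (K₁ + J) ℓ = (K + J) ℓ := by
        intro ℓ hne
        have : (K₁ + J) ℓ = K₁ ℓ + J ℓ := rfl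
        rw [this, hK1ne ℓ hne]; rfl
      have hlt_ne : ∀ ℓ : Fin n, (ℓ : ℕ) < m → ℓ ≠ km := by
        intro ℓ h he
        rw [he] at h
        exact Nat.lt_irrefl m h
      have hP' : ∀ ℓ : Fin n, m + 1 ≤ (ℓ : ℕ) → K ℓ = J ℓ := by
        intro ℓ h
        have hne : ℓ ≠ km := by
          intro he; rw [he] at h; exact Nat.not_succ_le_self m h
        rw [← hK1ne ℓ hne]
        exact hP ℓ (by omega)
      rw [if_pos ⟨hP', by rw [pb_succ _ _ hmn]; exact hc⟩]
      have ha : pb n (K₁ + J) m = prevBit n (K + J) km := by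
        rw [prevBit_eq_pb]
        exact pb_congr _ _ m (fun ℓ h => hIne ℓ (hlt_ne ℓ h))
      have hterm : ∀ ℓ : Fin n, (ℓ : ℕ) < m → term u (K₁ + J) ℓ = term u (K + J) ℓ := by
        intro ℓ h
        unfold term
        rw [hIne ℓ (hlt_ne ℓ h), prevBit_eq_pb, prevBit_eq_pb,
          pb_congr _ _ _ (fun ℓ' h' => hIne ℓ' (hlt_ne ℓ' (by omega)))]
      have hprod1 : (∏ ℓ : Fin n, if (ℓ : ℕ) < m then term u (K₁ + J) ℓ else 1)
          = ∏ ℓ : Fin n, if (ℓ : ℕ) < m then term u (K + J) ℓ else 1 := by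
        refine Finset.prod_congr rfl fun ℓ _ => ?_
        split_ifs with h
        · exact hterm ℓ h
        · rfl
      have hfact : ∀ ℓ : Fin n, (if (ℓ : ℕ) < m + 1 then term u (K + J) ℓ else 1)
          = (if ℓ = km then term u (K + J) ℓ else 1) *
            (if (ℓ : ℕ) < m then term u (K + J) ℓ else 1) := by
        intro ℓ
        rcases lt_trichotomy (ℓ : ℕ) m with h | h | h
        · rw [if_pos (by omega), if_neg (hlt_ne ℓ h), if_pos h, one_mul]
        · rw [if_pos (by omega), if_pos (Fin.ext h), if_neg (by omega), mul_one]
        · rw [if_neg (by omega),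
            if_neg (fun (he : ℓ = km) => by rw [he] at h; exact Nat.lt_irrefl m h),
            if_neg (by omega), one_mul]
      rw [Finset.prod_congr rfl fun ℓ _ => hfact ℓ, Finset.prod_mul_distrib,
        Finset.prod_ite_eq' Finset.univ km (fun ℓ => term u (K + J) ℓ),
        if_pos (Finset.mem_univ _), hprod1, ha]
      congr 1
      rw [term, hc]
    · rw [if_neg, Finset.sum_eq_zero]
      · intro c' _
        rw [if_neg, mul_zero]
        rintro ⟨h1, -⟩
        exact hP h1
      · rintro ⟨h1, h2⟩
        apply hP
        intro ℓ hℓ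
        rcases Nat.lt_or_ge m (ℓ : ℕ) with h | h
        · have hne : ℓ ≠ km := by
            intro he; rw [he] at h; exact Nat.lt_irrefl m h
          have : K₁ ℓ = K ℓ := by
            simp [hK1, Pi.single_apply, hne]
          rw [this]
          exact h1 ℓ h
        · have hℓkm : ℓ = km := Fin.ext (le_antisymm h hℓ)
          rw [hℓkm, hK1m, h2, pb_succ _ _ hmn]
          have : (K + J) km = K km + J km := rfl
          rw [this]
          exact (by decide : ∀ a b : ZMod 2, a + (a + b) = b) _ _

lemma norm_U3_sq (θ φ lam : ℝ) (a b : ZMod 2) :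
    ‖U3 θ φ lam a b‖ ^ 2 =
      if a + b = 0 then Real.cos (θ / 2) ^ 2 else Real.sin (θ / 2) ^ 2 := by
  have hz : ∀ x : ZMod 2, x = 0 ∨ x = 1 := by decide
  have hexp : ∀ z : ℂ, z.re = 0 → ‖Complex.exp z‖ = 1 := by
    intro z hz
    rw [Complex.norm_exp, hz, Real.exp_zero]
  have hone : (1 : ZMod 2) ≠ 0 := by decide
  have habs : ∀ r : ℝ, ‖(r : ℂ)‖ ^ 2 = r ^ 2 := by
    intro r
    rw [Complex.norm_real, Real.norm_eq_abs, sq_abs]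
  rcases hz a with ha | ha <;> rcases hz b with hb | hb <;> subst ha <;> subst hb
  · have h1 : U3 θ φ lam 0 0 = (Real.cos (θ / 2) : ℂ) := by simp [U3]
    rw [h1, if_pos (by decide), habs]
  · have h1 : U3 θ φ lam 0 1 = -Complex.exp (Complex.I * lam) * (Real.sin (θ / 2) : ℂ) := by
      simp [U3, hone]
    rw [h1, if_neg (by decide), norm_mul, norm_neg, hexp _ (by simp [Complex.mul_re]),
      one_mul, habs]
  · have h1 : U3 θ φ lam 1 0 = Complex.exp (Complex.I * φ) * (Real.sin (θ / 2) : ℂ) := by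
      simp [U3, hone]
    rw [h1, if_neg (by decide), norm_mul, hexp _ (by simp [Complex.mul_re]), one_mul, habs]
  · have h1 : U3 θ φ lam 1 1 = Complex.exp (Complex.I * (lam + φ)) * (Real.cos (θ / 2) : ℂ) := by
      simp [U3, hone]
    rw [h1, if_pos (by decide), norm_mul, hexp _ (by simp [Complex.mul_re]), one_mul, habs]

theorem stmt_10 (n : ℕ) (u : Fin n → ℝ × ℝ × ℝ) (J' J : Fin n → ZMod 2) :
    ∑ k : ZMod 2, ‖walkU n u (k, J') (0, J)‖ ^ 2 =
      fq n (fun ℓ => (u ℓ).1) (J' + J) := by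
  have hwalk : walkU n u = Mpart n u n := by
    unfold walkU Mpart
    rw [List.take_of_length_le (by simp)]
  have htriv : ∀ ℓ : Fin n, n ≤ (ℓ : ℕ) → J' ℓ = J ℓ := fun ℓ h =>
    absurd h (by omega)
  have hk : ∀ k : ZMod 2, walkU n u (k, J') (0, J) =
      if k = pb n (J' + J) n then
        ∏ ℓ : Fin n, if (ℓ : ℕ) < n then term u (J' + J) ℓ else 1
      else 0 := by
    intro k
    rw [hwalk, key u n (le_refl n) k J' J]
    simp only [eq_true htriv, true_and]
  simp only [hk]
  have hnorm : ∀ k : ZMod 2,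
      ‖if k = pb n (J' + J) n then
          ∏ ℓ : Fin n, if (ℓ : ℕ) < n then term u (J' + J) ℓ else 1
        else 0‖ ^ 2 =
      if k = pb n (J' + J) n then
        ‖∏ ℓ : Fin n, if (ℓ : ℕ) < n then term u (J' + J) ℓ else 1‖ ^ 2
      else 0 := by
    intro k; split_ifs <;> simp
  simp only [hnorm]
  rw [Finset.sum_ite_eq' Finset.univ (pb n (J' + J) n), if_pos (Finset.mem_univ _)]
  have hprod : (∏ ℓ : Fin n, if (ℓ : ℕ) < n then term u (J' + J) ℓ else 1)
      = ∏ ℓ : Fin n, term u (J' + J) ℓ :=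
    Finset.prod_congr rfl fun ℓ _ => if_pos ℓ.isLt
  rw [hprod, norm_prod, ← Finset.prod_pow, fq]
  exact Finset.prod_congr rfl fun ℓ _ => norm_U3_sq _ _ _ _ _
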